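/- For two continuous functions γ₁, γ₂ : S^n → ℝ₊, the Wulff shapes satisfy W_{γ₁} = W_{γ₂} if and only if the boundaries of the convex hulls of inv(graph(γ₁)) and inv(graph(γ₂)) coincide, i.e. Γ_{γ₁} = Γ_{γ₂}. -/

import Mathlib

open scoped RealInnerProductSpace

noncomputable def sphereInv {n : ℕ} (x : EuclideanSpace ℝ (Fin (n+1))) :
    EuclideanSpace ℝ (Fin (n+1)) := -((‖x‖^2)⁻¹ • x)

noncomputable def graphSet {n : ℕ} (γ : EuclideanSpace ℝ (Fin (n+1)) → ℝ) :
    Set (EuclideanSpace ℝ (Fin (n+1))) :=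
  (fun θ => γ θ • θ) '' Metric.sphere 0 1

noncomputable def Wulff {n : ℕ} (γ : EuclideanSpace ℝ (Fin (n+1)) → ℝ) :
    Set (EuclideanSpace ℝ (Fin (n+1))) :=
  ⋂ θ ∈ Metric.sphere (0 : EuclideanSpace ℝ (Fin (n+1))) 1,
    {x | ⟪x, θ⟫ ≤ γ θ}

section Aux

variable {n : ℕ} {γ : EuclideanSpace ℝ (Fin (n+1)) → ℝ}

/-- Explicit description of `sphereInv '' graphSet γ`. -/
lemma image_sphereInv_graphSet
    (hpos : ∀ θ ∈ Metric.sphere (0 : EuclideanSpace ℝ (Fin (n+1))) 1, 0 < γ θ) :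
    sphereInv '' graphSet γ =
      (fun θ : EuclideanSpace ℝ (Fin (n+1)) => -((γ θ)⁻¹ • θ)) '' Metric.sphere 0 1 := by
  rw [graphSet, Set.image_image]
  refine Set.image_congr fun θ hθ => ?_
  have h1 : ‖θ‖ = 1 := mem_sphere_zero_iff_norm.mp hθ
  have hg := hpos θ hθ
  rw [sphereInv, norm_smul, h1, mul_one, Real.norm_eq_abs, abs_of_pos hg, smul_smul]
  congr 2
  rw [sq]
  field_simp

lemma mem_Wulff_iff
    (hpos : ∀ θ ∈ Metric.sphere (0 : EuclideanSpace ℝ (Fin (n+1))) 1, 0 < γ θ)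
    {x : EuclideanSpace ℝ (Fin (n+1))} :
    x ∈ Wulff γ ↔ ∀ y ∈ sphereInv '' graphSet γ, -1 ≤ ⟪x, y⟫ := by
  rw [Wulff, image_sphereInv_graphSet hpos]
  simp only [Set.mem_iInter₂, Set.mem_setOf_eq]
  constructor
  · rintro h y ⟨θ, hθ, rfl⟩
    have hg := hpos θ hθ
    have h' := h θ hθ
    have hginv : 0 < (γ θ)⁻¹ := inv_pos.mpr hg
    have hcan : γ θ * (γ θ)⁻¹ = 1 := mul_inv_cancel₀ hg.ne'
    rw [inner_neg_right, real_inner_smul_right]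
    nlinarith
  · intro h θ hθ
    have hg := hpos θ hθ
    have h' := h _ ⟨θ, hθ, rfl⟩
    rw [inner_neg_right, real_inner_smul_right] at h'
    have hginv : 0 < (γ θ)⁻¹ := inv_pos.mpr hg
    have hcan : γ θ * (γ θ)⁻¹ = 1 := mul_inv_cancel₀ hg.ne'
    nlinarith

lemma forall_closure_hull_iff {s : Set (EuclideanSpace ℝ (Fin (n+1)))}
    {x : EuclideanSpace ℝ (Fin (n+1))} :
    (∀ y ∈ closure (convexHull ℝ s), -1 ≤ ⟪x, y⟫) ↔ ∀ y ∈ s, -1 ≤ ⟪x, y⟫ := by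
  constructor
  · exact fun h y hy => h y (subset_closure (subset_convexHull ℝ s hy))
  · intro h y hy
    have hT : s ⊆ (innerSL ℝ x) ⁻¹' Set.Ici (-1) := fun z hz => h z hz
    have hconv : Convex ℝ ((innerSL ℝ x) ⁻¹' Set.Ici (-1)) :=
      (convex_Ici (-1)).linear_preimage (innerSL ℝ x).toLinearMap
    have hcl : IsClosed ((innerSL ℝ x) ⁻¹' Set.Ici (-1)) :=
      isClosed_Ici.preimage (innerSL ℝ x).continuous
    exact closure_minimal (convexHull_min hT hconv) hcl hy

lemma wulff_eq_polar
    (hpos : ∀ θ ∈ Metric.sphere (0 : EuclideanSpace ℝ (Fin (n+1))) 1, 0 < γ θ) :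
    Wulff γ = {x | ∀ y ∈ closure (convexHull ℝ (sphereInv '' graphSet γ)), -1 ≤ ⟪x, y⟫} := by
  ext x
  rw [Set.mem_setOf_eq, forall_closure_hull_iff, mem_Wulff_iff hpos]

lemma exists_sep {C : Set (EuclideanSpace ℝ (Fin (n+1)))} (hconv : Convex ℝ C)
    (hcl : IsClosed C) (h0 : (0 : EuclideanSpace ℝ (Fin (n+1))) ∈ C)
    {y : EuclideanSpace ℝ (Fin (n+1))} (hy : y ∉ C) :
    ∃ v : EuclideanSpace ℝ (Fin (n+1)), ∃ u : ℝ,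
      0 < u ∧ (∀ a ∈ C, ⟪v, a⟫ < u) ∧ u < ⟪v, y⟫ := by
  obtain ⟨f, u, hfa, hfy⟩ := geometric_hahn_banach_closed_point hconv hcl hy
  refine ⟨(InnerProductSpace.toDual ℝ _).symm f, u, ?_, ?_, ?_⟩
  · have := hfa 0 h0
    simpa using this
  · intro a ha
    rw [InnerProductSpace.toDual_symm_apply]
    exact hfa a ha
  · rw [InnerProductSpace.toDual_symm_apply]
    exact hfy

lemma zero_mem_hull
    (hpos : ∀ θ ∈ Metric.sphere (0 : EuclideanSpace ℝ (Fin (n+1))) 1, 0 < γ θ) :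
    (0 : EuclideanSpace ℝ (Fin (n+1))) ∈ convexHull ℝ (sphereInv '' graphSet γ) := by
  rw [image_sphereInv_graphSet hpos]
  set e : EuclideanSpace ℝ (Fin (n+1)) := EuclideanSpace.single (0 : Fin (n+1)) (1 : ℝ) with he_def
  have hnorm : ‖e‖ = 1 := by simp [he_def]
  have he : e ∈ Metric.sphere (0 : EuclideanSpace ℝ (Fin (n+1))) 1 :=
    mem_sphere_zero_iff_norm.mpr hnorm
  have hne : -e ∈ Metric.sphere (0 : EuclideanSpace ℝ (Fin (n+1))) 1 :=
    mem_sphere_zero_iff_norm.mpr (by rw [norm_neg]; exact hnorm)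
  set a := (γ e)⁻¹ with ha_def
  set b := (γ (-e))⁻¹ with hb_def
  have ha : 0 < a := inv_pos.mpr (hpos e he)
  have hb : 0 < b := inv_pos.mpr (hpos (-e) hne)
  have hab : 0 < a + b := by linarith
  have hp : -((γ e)⁻¹ • e) ∈
      (fun θ : EuclideanSpace ℝ (Fin (n+1)) => -((γ θ)⁻¹ • θ)) '' Metric.sphere 0 1 :=
    ⟨e, he, rfl⟩
  have hq : -((γ (-e))⁻¹ • (-e)) ∈
      (fun θ : EuclideanSpace ℝ (Fin (n+1)) => -((γ θ)⁻¹ • θ)) '' Metric.sphere 0 1 :=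
    ⟨-e, hne, rfl⟩
  have hmem := (convex_convexHull ℝ _)
    (subset_convexHull ℝ _ hp) (subset_convexHull ℝ _ hq)
    (div_nonneg hb.le hab.le) (div_nonneg ha.le hab.le)
    (by field_simp; ring)
  have key : (b / (a + b)) • (-((γ e)⁻¹ • e)) + (a / (a + b)) • (-((γ (-e))⁻¹ • (-e)))
      = (0 : EuclideanSpace ℝ (Fin (n+1))) := by
    rw [← ha_def, ← hb_def]
    match_scalars
    field_simp
    ring
  rwa [key] at hmem

variable {F : Type*} [NormedAddCommGroup F] [NormedSpace ℝ F]

lemma interior_closure_of_convex {A : Set F} (hA : Convex ℝ A)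
    (h : (interior A).Nonempty) : interior (closure A) = interior A := by
  refine subset_antisymm ?_ (interior_mono subset_closure)
  obtain ⟨z, hz⟩ := h
  intro x hx
  have hcont : Continuous (fun t : ℝ => x + t • (x - z)) := by continuity
  have hev : ∀ᶠ t : ℝ in nhds 0, x + t • (x - z) ∈ interior (closure A) := by
    have : ContinuousAt (fun t : ℝ => x + t • (x - z)) 0 := hcont.continuousAt
    apply this.eventually_mem
    · rw [show x + (0:ℝ) • (x - z) = x by simp]
      exact isOpen_interior.mem_nhds hx
  obtain ⟨ε, hε, hball⟩ := Metric.eventually_nhds_iff.mp hev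
  set δ : ℝ := ε / 2 with hδ_def
  have hδ : 0 < δ := by positivity
  have hy : x + δ • (x - z) ∈ closure A := by
    refine interior_subset (hball ?_)
    simp only [dist_zero_right, Real.norm_eq_abs, abs_of_pos hδ]
    linarith
  have h1δ : (0:ℝ) < 1 + δ := by linarith
  have hxeq : x = (1 + δ)⁻¹ • (x + δ • (x - z)) + (δ / (1 + δ)) • z := by
    match_scalars <;> field_simp <;> ring
  rw [hxeq]
  exact hA.combo_closure_interior_mem_interior hy hz (by positivity)
    (by positivity) (by field_simp)

lemma subset_of_frontier_subset {A B : Set F} (hA : Convex ℝ A) (hAc : IsClosed A)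
    (hAb : Bornology.IsBounded A) (hA0 : A ∈ nhds 0) (hBconv : Convex ℝ B)
    (hBc : IsClosed B) (hB0 : B ∈ nhds 0) (hf : frontier A ⊆ B) : A ⊆ B := by
  intro x hx
  by_cases hx0 : x = 0
  · exact hx0 ▸ mem_of_mem_nhds hB0
  have habs : Absorbent ℝ A := absorbent_nhds_zero hA0
  have hvb : Bornology.IsVonNBounded ℝ A := (NormedSpace.isVonNBounded_iff ℝ).mpr hAb
  have hg0 : 0 < gauge A x := (gauge_pos habs hvb).mpr hx0
  have hg1 : gauge A x ≤ 1 := gauge_le_one_of_mem hx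
  have hz : gauge A ((gauge A x)⁻¹ • x) = 1 := by
    rw [gauge_smul_of_nonneg (inv_nonneg.mpr hg0.le), smul_eq_mul, inv_mul_cancel₀ hg0.ne']
  have hzB : (gauge A x)⁻¹ • x ∈ B :=
    hf ((gauge_eq_one_iff_mem_frontier hA hA0).mp hz)
  have h0B : (0 : F) ∈ B := mem_of_mem_nhds hB0
  have := hBconv hzB h0B hg0.le (sub_nonneg.mpr hg1) (by ring)
  simpa [smul_smul, mul_inv_cancel₀ hg0.ne'] using this

lemma sphere_ne : (Metric.sphere (0 : EuclideanSpace ℝ (Fin (n+1))) 1).Nonempty := by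
  refine ⟨EuclideanSpace.single (0 : Fin (n+1)) (1 : ℝ), ?_⟩
  simp [mem_sphere_zero_iff_norm]

lemma exists_bounds (hc : ContinuousOn γ (Metric.sphere 0 1))
    (hpos : ∀ θ ∈ Metric.sphere (0 : EuclideanSpace ℝ (Fin (n+1))) 1, 0 < γ θ) :
    ∃ m M : ℝ, 0 < m ∧ 0 < M ∧
      ∀ θ ∈ Metric.sphere (0 : EuclideanSpace ℝ (Fin (n+1))) 1, m ≤ γ θ ∧ γ θ ≤ M := by
  obtain ⟨θm, hθm, hm⟩ := (isCompact_sphere (0 : EuclideanSpace ℝ (Fin (n+1))) 1).exists_isMinOn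
    sphere_ne hc
  obtain ⟨θM, hθM, hM⟩ := (isCompact_sphere (0 : EuclideanSpace ℝ (Fin (n+1))) 1).exists_isMaxOn
    sphere_ne hc
  exact ⟨γ θm, γ θM, hpos θm hθm, hpos θM hθM, fun θ hθ => ⟨hm hθ, hM hθ⟩⟩

lemma image_bounded (hc : ContinuousOn γ (Metric.sphere 0 1))
    (hpos : ∀ θ ∈ Metric.sphere (0 : EuclideanSpace ℝ (Fin (n+1))) 1, 0 < γ θ) :
    Bornology.IsBounded (sphereInv '' graphSet γ) := by
  obtain ⟨m, M, hm, hM, hb⟩ := exists_bounds hc hpos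
  rw [image_sphereInv_graphSet hpos]
  refine (Metric.isBounded_closedBall (x := (0 : EuclideanSpace ℝ (Fin (n+1)))) (r := m⁻¹)).subset ?_
  rintro _ ⟨θ, hθ, rfl⟩
  have h1 : ‖θ‖ = 1 := mem_sphere_zero_iff_norm.mp hθ
  have hg := hpos θ hθ
  simp only [Metric.mem_closedBall, dist_zero_right, norm_neg, norm_smul, h1, mul_one,
    Real.norm_eq_abs, abs_of_pos (inv_pos.mpr hg)]
  exact inv_anti₀ hm (hb θ hθ).1

local notation "C[" γ "]" => closure (convexHull ℝ (sphereInv '' graphSet γ))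

lemma C_convex : Convex ℝ C[γ] := (convex_convexHull ℝ _).closure

lemma C_zero (hpos : ∀ θ ∈ Metric.sphere (0 : EuclideanSpace ℝ (Fin (n+1))) 1, 0 < γ θ) :
    (0 : EuclideanSpace ℝ (Fin (n+1))) ∈ C[γ] := subset_closure (zero_mem_hull hpos)

lemma ball_subset_C (hc : ContinuousOn γ (Metric.sphere 0 1))
    (hpos : ∀ θ ∈ Metric.sphere (0 : EuclideanSpace ℝ (Fin (n+1))) 1, 0 < γ θ) :
    ∃ r : ℝ, 0 < r ∧ Metric.ball (0 : EuclideanSpace ℝ (Fin (n+1))) r ⊆ C[γ] := by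
  obtain ⟨m, M, hm, hM, hb⟩ := exists_bounds hc hpos
  refine ⟨M⁻¹, inv_pos.mpr hM, fun x hx => ?_⟩
  rw [Metric.mem_ball, dist_zero_right] at hx
  by_contra hxC
  obtain ⟨v, u, hu, hva, hvx⟩ := exists_sep C_convex isClosed_closure (C_zero hpos) hxC
  have hv0 : v ≠ 0 := by
    rintro rfl
    rw [inner_zero_left] at hvx
    linarith
  have hvpos : 0 < ‖v‖ := norm_pos_iff.mpr hv0
  set θ : EuclideanSpace ℝ (Fin (n+1)) := -(‖v‖⁻¹ • v) with hθ_def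
  have hθ : θ ∈ Metric.sphere (0 : EuclideanSpace ℝ (Fin (n+1))) 1 := by
    rw [mem_sphere_zero_iff_norm, hθ_def, norm_neg, norm_smul, norm_inv, norm_norm,
      inv_mul_cancel₀ hvpos.ne']
  have hs : -((γ θ)⁻¹ • θ) ∈ C[γ] := by
    refine subset_closure (subset_convexHull ℝ _ ?_)
    rw [image_sphereInv_graphSet hpos]
    exact ⟨θ, hθ, rfl⟩
  have h1 := hva _ hs
  have hinner : ⟪v, -((γ θ)⁻¹ • θ)⟫ = (γ θ)⁻¹ * ‖v‖ := by
    rw [hθ_def, inner_neg_right, real_inner_smul_right, inner_neg_right,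
      real_inner_smul_right, real_inner_self_eq_norm_sq, sq]
    field_simp
  rw [hinner] at h1
  have h2 : ⟪v, x⟫ ≤ ‖v‖ * ‖x‖ := real_inner_le_norm v x
  have h3 : M⁻¹ ≤ (γ θ)⁻¹ := inv_anti₀ (hpos θ hθ) (hb θ hθ).2
  nlinarith

lemma bipolar (hc : ContinuousOn γ (Metric.sphere 0 1))
    (hpos : ∀ θ ∈ Metric.sphere (0 : EuclideanSpace ℝ (Fin (n+1))) 1, 0 < γ θ) :
    C[γ] = {y | ∀ x ∈ Wulff γ, -1 ≤ ⟪x, y⟫} := by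
  apply subset_antisymm
  · intro y hy x hx
    rw [mem_Wulff_iff hpos] at hx
    have : ∀ z ∈ C[γ], -1 ≤ ⟪x, z⟫ := by
      intro z hz
      have hT : sphereInv '' graphSet γ ⊆ (innerSL ℝ x) ⁻¹' Set.Ici (-1) := fun w hw => hx w hw
      have hconv : Convex ℝ ((innerSL ℝ x) ⁻¹' Set.Ici (-1)) :=
        (convex_Ici (-1)).linear_preimage (innerSL ℝ x).toLinearMap
      have hcl : IsClosed ((innerSL ℝ x) ⁻¹' Set.Ici (-1)) :=
        isClosed_Ici.preimage (innerSL ℝ x).continuous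
      exact closure_minimal (convexHull_min hT hconv) hcl hz
    exact this y hy
  · intro y hy
    by_contra hyC
    obtain ⟨v, u, hu, hva, hvy⟩ := exists_sep C_convex isClosed_closure (C_zero hpos) hyC
    have huinv : 0 < u⁻¹ := inv_pos.mpr hu
    have hucan : u * u⁻¹ = 1 := mul_inv_cancel₀ hu.ne'
    have hxW : -(u⁻¹ • v) ∈ Wulff γ := by
      rw [mem_Wulff_iff hpos]
      intro z hz
      have h1 := hva z (subset_closure (subset_convexHull ℝ _ hz))
      rw [inner_neg_left, real_inner_smul_left]
      nlinarith
    have h2 := hy _ hxW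
    rw [inner_neg_left, real_inner_smul_left] at h2
    nlinarith

lemma interior_hull_nonempty
    (hpos : ∀ θ ∈ Metric.sphere (0 : EuclideanSpace ℝ (Fin (n+1))) 1, 0 < γ θ) :
    (interior (convexHull ℝ (sphereInv '' graphSet γ))).Nonempty := by
  rw [Convex.interior_nonempty_iff_affineSpan_eq_top (convex_convexHull ℝ _),
    affineSpan_convexHull]
  have hTne : (sphereInv '' graphSet γ).Nonempty := by
    rw [image_sphereInv_graphSet hpos]
    refine ⟨_, ⟨EuclideanSpace.single (0 : Fin (n+1)) (1 : ℝ), by simp [mem_sphere_zero_iff_norm],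
      rfl⟩⟩
  rw [AffineSubspace.affineSpan_eq_top_iff_vectorSpan_eq_top_of_nonempty ℝ (EuclideanSpace ℝ (Fin (n+1))) (EuclideanSpace ℝ (Fin (n+1))) hTne]
  rw [eq_top_iff, ← (EuclideanSpace.basisFun (Fin (n+1)) ℝ).toBasis.span_eq, Submodule.span_le]
  rintro _ ⟨i, rfl⟩
  set e : EuclideanSpace ℝ (Fin (n+1)) := EuclideanSpace.single i (1 : ℝ) with he_def
  have hnorm : ‖e‖ = 1 := by simp [he_def]
  have he : e ∈ Metric.sphere (0 : EuclideanSpace ℝ (Fin (n+1))) 1 :=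
    mem_sphere_zero_iff_norm.mpr hnorm
  have hne : -e ∈ Metric.sphere (0 : EuclideanSpace ℝ (Fin (n+1))) 1 :=
    mem_sphere_zero_iff_norm.mpr (by rw [norm_neg]; exact hnorm)
  have hp : -((γ (-e))⁻¹ • (-e)) ∈ sphereInv '' graphSet γ := by
    rw [image_sphereInv_graphSet hpos]; exact ⟨-e, hne, rfl⟩
  have hq : -((γ e)⁻¹ • e) ∈ sphereInv '' graphSet γ := by
    rw [image_sphereInv_graphSet hpos]; exact ⟨e, he, rfl⟩
  have hsub : -((γ (-e))⁻¹ • (-e)) -ᵥ -((γ e)⁻¹ • e) ∈ vectorSpan ℝ (sphereInv '' graphSet γ) :=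
    vsub_mem_vectorSpan ℝ hp hq
  have ha : 0 < (γ (-e))⁻¹ := inv_pos.mpr (hpos (-e) hne)
  have hb : 0 < (γ e)⁻¹ := inv_pos.mpr (hpos e he)
  have hab : (0:ℝ) < (γ (-e))⁻¹ + (γ e)⁻¹ := by linarith
  have hpq : -((γ (-e))⁻¹ • (-e)) -ᵥ -((γ e)⁻¹ • e) = ((γ (-e))⁻¹ + (γ e)⁻¹) • e := by
    rw [vsub_eq_sub]
    module
  rw [hpq] at hsub
  have := Submodule.smul_mem _ ((γ (-e))⁻¹ + (γ e)⁻¹)⁻¹ hsub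
  rw [smul_smul, inv_mul_cancel₀ hab.ne', one_smul] at this
  simpa [he_def] using this

lemma frontier_hull_eq_frontier_C
    (hpos : ∀ θ ∈ Metric.sphere (0 : EuclideanSpace ℝ (Fin (n+1))) 1, 0 < γ θ) :
    frontier (convexHull ℝ (sphereInv '' graphSet γ)) = frontier C[γ] := by
  rw [frontier, frontier, closure_closure,
    interior_closure_of_convex (convex_convexHull ℝ _) (interior_hull_nonempty hpos)]

end Aux

/-- For continuous positive `γ₁, γ₂` on `S^n`, `W_{γ₁} = W_{γ₂}` iff
`Γ_{γ₁} = Γ_{γ₂}`. -/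
theorem stmt_11 {n : ℕ} (γ₁ γ₂ : EuclideanSpace ℝ (Fin (n+1)) → ℝ)
    (hc₁ : ContinuousOn γ₁ (Metric.sphere 0 1))
    (hc₂ : ContinuousOn γ₂ (Metric.sphere 0 1))
    (hpos₁ : ∀ θ ∈ Metric.sphere (0 : EuclideanSpace ℝ (Fin (n+1))) 1, 0 < γ₁ θ)
    (hpos₂ : ∀ θ ∈ Metric.sphere (0 : EuclideanSpace ℝ (Fin (n+1))) 1, 0 < γ₂ θ) :
    Wulff γ₁ = Wulff γ₂ ↔
      frontier (convexHull ℝ (sphereInv '' graphSet γ₁)) =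
        frontier (convexHull ℝ (sphereInv '' graphSet γ₂)) := by
  have hfr₁ := frontier_hull_eq_frontier_C hpos₁
  have hfr₂ := frontier_hull_eq_frontier_C hpos₂
  constructor
  · intro hW
    have hC : closure (convexHull ℝ (sphereInv '' graphSet γ₁))
        = closure (convexHull ℝ (sphereInv '' graphSet γ₂)) := by
      rw [bipolar hc₁ hpos₁, bipolar hc₂ hpos₂, hW]
    rw [hfr₁, hfr₂, hC]
  · intro hF
    have hFC : frontier (closure (convexHull ℝ (sphereInv '' graphSet γ₁)))
        = frontier (closure (convexHull ℝ (sphereInv '' graphSet γ₂))) := by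
      rw [← hfr₁, ← hfr₂, hF]
    obtain ⟨r₁, hr₁, hball₁⟩ := ball_subset_C hc₁ hpos₁
    obtain ⟨r₂, hr₂, hball₂⟩ := ball_subset_C hc₂ hpos₂
    have hnh₁ : closure (convexHull ℝ (sphereInv '' graphSet γ₁))
        ∈ nhds (0 : EuclideanSpace ℝ (Fin (n+1))) :=
      Filter.mem_of_superset (Metric.ball_mem_nhds 0 hr₁) hball₁
    have hnh₂ : closure (convexHull ℝ (sphereInv '' graphSet γ₂))
        ∈ nhds (0 : EuclideanSpace ℝ (Fin (n+1))) :=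
      Filter.mem_of_superset (Metric.ball_mem_nhds 0 hr₂) hball₂
    have hbd₁ : Bornology.IsBounded (closure (convexHull ℝ (sphereInv '' graphSet γ₁))) :=
      (isBounded_convexHull.mpr (image_bounded hc₁ hpos₁)).closure
    have hbd₂ : Bornology.IsBounded (closure (convexHull ℝ (sphereInv '' graphSet γ₂))) :=
      (isBounded_convexHull.mpr (image_bounded hc₂ hpos₂)).closure
    have hfs₁ : frontier (closure (convexHull ℝ (sphereInv '' graphSet γ₁)))
        ⊆ closure (convexHull ℝ (sphereInv '' graphSet γ₂)) := by
      rw [hFC]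
      exact frontier_subset_closure.trans (isClosed_closure.closure_eq).subset
    have hfs₂ : frontier (closure (convexHull ℝ (sphereInv '' graphSet γ₂)))
        ⊆ closure (convexHull ℝ (sphereInv '' graphSet γ₁)) := by
      rw [← hFC]
      exact frontier_subset_closure.trans (isClosed_closure.closure_eq).subset
    have hC : closure (convexHull ℝ (sphereInv '' graphSet γ₁))
        = closure (convexHull ℝ (sphereInv '' graphSet γ₂)) :=
      subset_antisymm
        (subset_of_frontier_subset C_convex isClosed_closure hbd₁ hnh₁ C_convex
          isClosed_closure hnh₂ hfs₁)
        (subset_of_frontier_subset C_convex isClosed_closure hbd₂ hnh₂ C_convex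
          isClosed_closure hnh₁ hfs₂)
    rw [wulff_eq_polar hpos₁, wulff_eq_polar hpos₂, hC]
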